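/- arXiv:1710.07453 — 3 statements merged into one kernel-verified Lean document; each statement's English description precedes it below -/
import Mathlib

section
/- Let m₁, m₂ ≥ 2 be integers and c = (c_{j₁,j₂}) ∈ ℝ^{m₁×m₂}. Define F_c(x₁,x₂) = Σ_{j₁=1}^{m₁} Σ_{j₂=1}^{m₂} c_{j₁,j₂} φ_{j₁}^{(m₁)}(x₁) φ_{j₂}^{(m₂)}(x₂) on [0,1]². Then the map x₁ ↦ F_c(x₁,x₂) is non-decreasing on [0,1] for every x₂ ∈ [0,1] if and only if c_{j₁−1,j₂} ≤ c_{j₁,j₂} for all j₁ = 2,…,m₁ and all j₂ = 1,…,m₂. -/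
open Finset

/-- Knots `t_j^{(m)} = (j-1) Δ_m` (0-indexed: `t_j = j/(m-1)`). -/
noncomputable def knot (m : ℕ) (j : Fin m) : ℝ := ((j : ℕ) : ℝ) / ((m : ℝ) - 1)

/-- Hat basis functions `φ_j^{(m)}(x) = max(0, 1 - |x - t_j^{(m)}|/Δ_m)` with `Δ_m = 1/(m-1)`. -/
noncomputable def hat (m : ℕ) (j : Fin m) (x : ℝ) : ℝ :=
  max 0 (1 - |x - knot m j| * ((m : ℝ) - 1))

/-- The 2D tensorised approximation
`F_c(x₁,x₂) = Σ_{j₁} Σ_{j₂} c_{j₁,j₂} φ_{j₁}^{(m₁)}(x₁) φ_{j₂}^{(m₂)}(x₂)`. -/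
noncomputable def Fc (m₁ m₂ : ℕ) (c : Fin m₁ → Fin m₂ → ℝ) (x₁ x₂ : ℝ) : ℝ :=
  ∑ j₁ : Fin m₁, ∑ j₂ : Fin m₂, c j₁ j₂ * hat m₁ j₁ x₁ * hat m₂ j₂ x₂


lemma Mpos {m : ℕ} (hm : 2 ≤ m) : (0:ℝ) < (m:ℝ) - 1 := by
  have : (2:ℝ) ≤ (m:ℝ) := by exact_mod_cast hm
  linarith

lemma hat_nonneg (m : ℕ) (j : Fin m) (x : ℝ) : 0 ≤ hat m j x := le_max_left _ _

lemma knot_diff {m : ℕ} (hm : 2 ≤ m) (j k : Fin m) :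
    (knot m k - knot m j) * ((m:ℝ)-1) = ((k:ℕ):ℝ) - ((j:ℕ):ℝ) := by
  have h := (Mpos hm).ne'
  unfold knot
  rw [sub_mul, div_mul_cancel₀ _ h, div_mul_cancel₀ _ h]

lemma hat_eq_zero {m : ℕ} {j : Fin m} {x : ℝ}
    (h : 1 ≤ |x - knot m j| * ((m:ℝ)-1)) : hat m j x = 0 := by
  unfold hat; exact max_eq_left (by linarith)

lemma hat_knot_self {m : ℕ} (hm : 2 ≤ m) (j : Fin m) : hat m j (knot m j) = 1 := by
  unfold hat; simp

lemma hat_knot_ne {m : ℕ} (hm : 2 ≤ m) {j k : Fin m} (h : j ≠ k) :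
    hat m j (knot m k) = 0 := by
  apply hat_eq_zero
  have hM := Mpos hm
  have : |knot m k - knot m j| * ((m:ℝ)-1) = |((k:ℕ):ℝ) - ((j:ℕ):ℝ)| := by
    rw [← knot_diff hm j k, abs_mul, abs_of_pos hM]
  rw [this]
  have hne : ((k:ℕ):ℤ) ≠ ((j:ℕ):ℤ) := by
    simp only [Ne, Int.natCast_inj]
    exact fun hc => h (Fin.ext hc.symm)
  have h1 : (1:ℤ) ≤ |((k:ℕ):ℤ) - ((j:ℕ):ℤ)| := Int.one_le_abs (sub_ne_zero.mpr hne)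
  have : ((k:ℕ):ℝ) - ((j:ℕ):ℝ) = (((k:ℕ):ℤ) - ((j:ℕ):ℤ) : ℤ) := by push_cast; ring
  rw [this, ← Int.cast_abs]
  exact_mod_cast h1

lemma knot_mem_Icc {m : ℕ} (hm : 2 ≤ m) (j : Fin m) : knot m j ∈ Set.Icc (0:ℝ) 1 := by
  have hM := Mpos hm
  constructor
  · exact div_nonneg (Nat.cast_nonneg _) hM.le
  · unfold knot
    rw [div_le_one hM]
    have : (j:ℕ) + 1 ≤ m := j.2
    have : ((j:ℕ):ℝ) + 1 ≤ (m:ℝ) := by exact_mod_cast this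
    linarith

lemma sum_hat_interval {m : ℕ} (hm : 2 ≤ m) (b : Fin m → ℝ) (k : ℕ) (hk : k + 1 < m)
    {x : ℝ} (hx1 : knot m ⟨k, Nat.lt_of_succ_lt hk⟩ ≤ x) (hx2 : x ≤ knot m ⟨k+1, hk⟩) :
    ∑ j, b j * hat m j x =
      b ⟨k, Nat.lt_of_succ_lt hk⟩ + (b ⟨k+1, hk⟩ - b ⟨k, Nat.lt_of_succ_lt hk⟩) *
        ((x - knot m ⟨k, Nat.lt_of_succ_lt hk⟩) * ((m:ℝ)-1)) := by
  have hM := Mpos hm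
  set K : Fin m := ⟨k, Nat.lt_of_succ_lt hk⟩ with hK
  set K1 : Fin m := ⟨k+1, hk⟩ with hK1
  set s : ℝ := (x - knot m K) * ((m:ℝ)-1) with hs
  have hdiff : (knot m K1 - knot m K) * ((m:ℝ)-1) = 1 := by
    rw [knot_diff hm]; show ((k+1:ℕ):ℝ) - ((k:ℕ):ℝ) = 1; push_cast; ring
  have hs0 : 0 ≤ s := mul_nonneg (by linarith) hM.le
  have hs1 : s ≤ 1 := by
    have : s ≤ (knot m K1 - knot m K) * ((m:ℝ)-1) := by
      apply mul_le_mul_of_nonneg_right _ hM.le; linarith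
    linarith [hdiff ▸ this]
  have hhatK : hat m K x = 1 - s := by
    unfold hat
    rw [abs_of_nonneg (by linarith)]
    exact max_eq_right (by rw [← hs]; linarith)
  have hhatK1 : hat m K1 x = s := by
    unfold hat
    rw [abs_of_nonpos (by linarith), neg_sub]
    have : (knot m K1 - x) * ((m:ℝ)-1) = 1 - s := by
      have : (knot m K1 - x) * ((m:ℝ)-1)
          = (knot m K1 - knot m K) * ((m:ℝ)-1) - s := by rw [hs]; ring
      rw [this, hdiff]
    rw [this, show (1:ℝ) - (1 - s) = s by ring]
    exact max_eq_right hs0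
  have hzero : ∀ j : Fin m, j ≠ K → j ≠ K1 → hat m j x = 0 := by
    intro j hjK hjK1
    apply hat_eq_zero
    rcases lt_or_gt_of_ne (fun h : (j:ℕ) = k => hjK (Fin.ext h)) with hlt | hgt
    · -- j < k : x - knot j ≥ (k - j)/M ≥ 1/M
      have h1 : (1:ℝ) ≤ (knot m K - knot m j) * ((m:ℝ)-1) := by
        rw [knot_diff hm]
        have : (j:ℕ) + 1 ≤ k := hlt
        have : ((j:ℕ):ℝ) + 1 ≤ (k:ℝ) := by exact_mod_cast this
        simp only [hK]; push_cast; linarith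
      have h2 : knot m K - knot m j ≤ x - knot m j := by linarith
      have : (1:ℝ) ≤ (x - knot m j) * ((m:ℝ)-1) :=
        le_trans h1 (mul_le_mul_of_nonneg_right h2 hM.le)
      calc (1:ℝ) ≤ (x - knot m j) * ((m:ℝ)-1) := this
        _ ≤ |x - knot m j| * ((m:ℝ)-1) :=
            mul_le_mul_of_nonneg_right (le_abs_self _) hM.le
    · -- j > k, j ≠ k+1 so j ≥ k+2
      have hge : k + 2 ≤ (j:ℕ) := by
        rcases Nat.lt_or_ge (j:ℕ) (k+2) with h | h
        · exfalso; exact hjK1 (Fin.ext (show (j:ℕ) = k + 1 by omega))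
        · exact h
      have h1 : (1:ℝ) ≤ (knot m j - knot m K1) * ((m:ℝ)-1) := by
        rw [knot_diff hm]
        have : ((k:ℝ)+2) ≤ ((j:ℕ):ℝ) := by exact_mod_cast hge
        simp only [hK1]; push_cast; linarith
      have h2 : knot m j - knot m K1 ≤ knot m j - x := by linarith
      have : (1:ℝ) ≤ (knot m j - x) * ((m:ℝ)-1) :=
        le_trans h1 (mul_le_mul_of_nonneg_right h2 hM.le)
      calc (1:ℝ) ≤ (knot m j - x) * ((m:ℝ)-1) := this
        _ ≤ |x - knot m j| * ((m:ℝ)-1) := by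
            rw [abs_sub_comm]
            exact mul_le_mul_of_nonneg_right (le_abs_self _) hM.le
  have hKne : K ≠ K1 := by simp [hK, hK1, Fin.ext_iff]
  have hsum : ∑ j, b j * hat m j x = ∑ j ∈ ({K, K1} : Finset (Fin m)), b j * hat m j x := by
    refine (Finset.sum_subset (Finset.subset_univ _) ?_).symm
    intro j _ hj
    simp only [Finset.mem_insert, Finset.mem_singleton, not_or] at hj
    rw [hzero j hj.1 hj.2, mul_zero]
  rw [hsum, Finset.sum_pair hKne, hhatK, hhatK1]
  ring

lemma monotoneOn_glue {f : ℝ → ℝ} {a b c : ℝ}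
    (h1 : MonotoneOn f (Set.Icc a b)) (h2 : MonotoneOn f (Set.Icc b c))
    (hab : a ≤ b) (hbc : b ≤ c) :
    MonotoneOn f (Set.Icc a c) := by
  intro x hx y hy hxy
  rcases le_total y b with hyb | hyb
  · exact h1 ⟨hx.1, le_trans hxy hyb⟩ ⟨hy.1, hyb⟩ hxy
  · rcases le_total x b with hxb | hxb
    · exact le_trans (h1 ⟨hx.1, hxb⟩ ⟨hab, le_refl b⟩ hxb)
        (h2 ⟨le_refl b, hbc⟩ ⟨hyb, hy.2⟩ hyb)
    · exact h2 ⟨hxb, hx.2⟩ ⟨hyb, hy.2⟩ hxy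

lemma knot_zero {m : ℕ} (h0 : 0 < m) : knot m ⟨0, h0⟩ = 0 := by simp [knot]

lemma knot_last {m : ℕ} (hm : 2 ≤ m) (h : m - 1 < m) : knot m ⟨m - 1, h⟩ = 1 := by
  have hM := Mpos hm
  unfold knot
  rw [div_eq_one_iff_eq hM.ne']
  have : 1 ≤ m := by omega
  push_cast [Nat.cast_sub this]
  ring

/-- Monotonicity of a hat-combination with nondecreasing adjacent coefficients. -/
lemma monotone_sum_hat {m : ℕ} (hm : 2 ≤ m) (b : Fin m → ℝ)
    (hb : ∀ k (hk : k + 1 < m), b ⟨k, Nat.lt_of_succ_lt hk⟩ ≤ b ⟨k+1, hk⟩) :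
    MonotoneOn (fun x => ∑ j, b j * hat m j x) (Set.Icc (0:ℝ) 1) := by
  have hM := Mpos hm
  have h0 : 0 < m := by omega
  -- monotone on each subinterval
  have hseg : ∀ k (hk : k + 1 < m),
      MonotoneOn (fun x => ∑ j, b j * hat m j x)
        (Set.Icc (knot m ⟨k, Nat.lt_of_succ_lt hk⟩) (knot m ⟨k+1, hk⟩)) := by
    intro k hk x hx y hy hxy
    simp only
    rw [sum_hat_interval hm b k hk hx.1 hx.2, sum_hat_interval hm b k hk hy.1 hy.2]
    have hbk := hb k hk
    have : (x - knot m ⟨k, Nat.lt_of_succ_lt hk⟩) * ((m:ℝ)-1)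
        ≤ (y - knot m ⟨k, Nat.lt_of_succ_lt hk⟩) * ((m:ℝ)-1) := by
      apply mul_le_mul_of_nonneg_right _ hM.le; linarith
    nlinarith
  -- induction: monotone on [knot 0, knot k]
  have hind : ∀ k (hk : k < m),
      MonotoneOn (fun x => ∑ j, b j * hat m j x)
        (Set.Icc (knot m ⟨0, h0⟩) (knot m ⟨k, hk⟩)) := by
    intro k
    induction k with
    | zero => intro hk
              rw [Set.Icc_self]
              exact Set.subsingleton_singleton.monotoneOn _
    | succ n ih =>
      intro hk
      have hn : n < m := Nat.lt_of_succ_lt hk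
      have hn1 : n + 1 < m := hk
      refine monotoneOn_glue (ih hn) (hseg n hn1) ?_ ?_
      · unfold knot
        rw [div_le_div_iff_of_pos_right hM]
        exact_mod_cast Nat.zero_le n
      · unfold knot
        rw [div_le_div_iff_of_pos_right hM]
        exact_mod_cast Nat.le_succ n
  have hlast : m - 1 < m := by omega
  have := hind (m-1) hlast
  rwa [knot_zero h0, knot_last hm hlast] at this


lemma Fc_knot {m₁ m₂ : ℕ} (hm₁ : 2 ≤ m₁) (hm₂ : 2 ≤ m₂) (c : Fin m₁ → Fin m₂ → ℝ)
    (j₁ : Fin m₁) (j₂ : Fin m₂) :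
    Fc m₁ m₂ c (knot m₁ j₁) (knot m₂ j₂) = c j₁ j₂ := by
  unfold Fc
  rw [Finset.sum_eq_single j₁]
  · rw [Finset.sum_eq_single j₂]
    · rw [hat_knot_self hm₁, hat_knot_self hm₂]; ring
    · intro b _ hb; rw [hat_knot_ne hm₂ hb, mul_zero]
    · intro h; exact absurd (Finset.mem_univ j₂) h
  · intro a _ ha
    apply Finset.sum_eq_zero
    intro b _
    rw [hat_knot_ne hm₁ ha]; ring
  · intro h; exact absurd (Finset.mem_univ j₁) h


/-- `x₁ ↦ F_c(x₁,x₂)` is non-decreasing on `[0,1]` for every `x₂ ∈ [0,1]` iff the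
coefficients are non-decreasing in their first index. -/
theorem Fc_monotone_first_iff (m₁ m₂ : ℕ) (hm₁ : 2 ≤ m₁) (hm₂ : 2 ≤ m₂)
    (c : Fin m₁ → Fin m₂ → ℝ) :
    (∀ x₂ ∈ Set.Icc (0 : ℝ) 1, MonotoneOn (fun x₁ => Fc m₁ m₂ c x₁ x₂) (Set.Icc (0 : ℝ) 1)) ↔
      (∀ j₁ : Fin m₁, ∀ hj : (j₁ : ℕ) + 1 < m₁, ∀ j₂ : Fin m₂,
        c j₁ j₂ ≤ c ⟨(j₁ : ℕ) + 1, hj⟩ j₂) := by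

  have hM₁ := Mpos hm₁
  constructor
  · intro H j₁ hj j₂
    have h1 := knot_mem_Icc hm₁ j₁
    have h2 := knot_mem_Icc hm₁ ⟨(j₁:ℕ)+1, hj⟩
    have hle : knot m₁ j₁ ≤ knot m₁ ⟨(j₁:ℕ)+1, hj⟩ := by
      unfold knot
      rw [div_le_div_iff_of_pos_right hM₁]
      exact_mod_cast Nat.le_succ _
    have := H (knot m₂ j₂) (knot_mem_Icc hm₂ j₂) h1 h2 hle
    simpa only [Fc_knot hm₁ hm₂ c j₁ j₂,
      Fc_knot hm₁ hm₂ c ⟨(j₁:ℕ)+1, hj⟩ j₂] using this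
  · intro H x₂ hx₂
    set b : Fin m₁ → ℝ := fun j₁ => ∑ j₂, c j₁ j₂ * hat m₂ j₂ x₂ with hbdef
    have hrw : ∀ x₁, Fc m₁ m₂ c x₁ x₂ = ∑ j₁, b j₁ * hat m₁ j₁ x₁ := by
      intro x₁
      unfold Fc
      refine Finset.sum_congr rfl fun j₁ _ => ?_
      rw [hbdef]
      rw [Finset.sum_mul]
      exact Finset.sum_congr rfl fun j₂ _ => by ring
    have hb : ∀ k (hk : k + 1 < m₁), b ⟨k, Nat.lt_of_succ_lt hk⟩ ≤ b ⟨k+1, hk⟩ := by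
      intro k hk
      apply Finset.sum_le_sum
      intro j₂ _
      have := H ⟨k, Nat.lt_of_succ_lt hk⟩ hk j₂
      exact mul_le_mul_of_nonneg_right this (hat_nonneg _ _ _)
    have := monotone_sum_hat hm₁ b hb
    intro x hx y hy hxy
    simp only [hrw]
    exact this hx hy hxy
end

section
/- Let (Ω, F, μ) be a probability space and B ∈ F with μ(B) > 0. Let Θ ⊂ ℝ^p, θ* ∈ Θ, and ε > 0. For each n, let L_n, a_n : Ω × Θ → ℝ be such that all suprema below are measurable in ω, and let b : Θ → ℝ. Assume: (i) a_n(ω, θ) ≤ 0 for all ω, θ, n; (ii) for every δ > 0, μ({ω : a_n(ω, θ*) ≤ −δ} ∩ B)/μ(B) → 0 as n → ∞; (iii) there exists C < ∞ with b(θ*) − b(θ) ≤ C for all θ ∈ Θ; (iv) for every M > 0, μ({ω : sup_{θ ∈ Θ, ‖θ−θ*‖ ≥ ε} (L_n(ω,θ) − L_n(ω,θ*)) ≥ −M}) → 0 as n → ∞. Define L̃_n(ω,θ) = L_n(ω,θ) + a_n(ω,θ) − b(θ). Then for every M > 0, μ({ω : sup_{θ ∈ Θ, ‖θ−θ*‖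 ≥ ε} (L̃_n(ω,θ) − L̃_n(ω,θ*)) ≥ −M} ∩ B)/μ(B) → 0 as n → ∞. -/
open MeasureTheory Filter

/-- Transfer of the uniform likelihood-ratio divergence from the unconstrained
log-likelihood `L_n` to the constrained log-likelihood
`L̃_n(θ) = L_n(θ) + a_n(θ) - b(θ)`, conditionally on the constraint event `B`. -/
theorem constrained_likelihood_divergence_transfer {Ω : Type*} [MeasurableSpace Ω]
    (μ : Measure Ω) [IsProbabilityMeasure μ] (B : Set Ω) (hB : MeasurableSet B)
    (hBpos : 0 < μ B) (p : ℕ)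
    (Θ : Set (EuclideanSpace ℝ (Fin p))) (θstar : EuclideanSpace ℝ (Fin p))
    (hθstar : θstar ∈ Θ) (ε : ℝ) (hε : 0 < ε)
    (L a : ℕ → Ω → EuclideanSpace ℝ (Fin p) → ℝ)
    (b : EuclideanSpace ℝ (Fin p) → ℝ)
    (hmeasL : ∀ n : ℕ, Measurable (fun ω =>
      sSup ((fun θ => L n ω θ - L n ω θstar) '' {θ | θ ∈ Θ ∧ ε ≤ ‖θ - θstar‖})))
    (hmeasLt : ∀ n : ℕ, Measurable (fun ω =>
      sSup ((fun θ => (L n ω θ + a n ω θ - b θ) - (L n ω θstar + a n ω θstar - b θstar)) ''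
        {θ | θ ∈ Θ ∧ ε ≤ ‖θ - θstar‖})))
    (ha_nonpos : ∀ (n : ℕ) (ω : Ω) (θ : EuclideanSpace ℝ (Fin p)), a n ω θ ≤ 0)
    (ha_star : ∀ δ > 0,
      Tendsto (fun n => μ ({ω | a n ω θstar ≤ -δ} ∩ B) / μ B) atTop (nhds 0))
    (hb : ∃ C : ℝ, ∀ θ ∈ Θ, b θstar - b θ ≤ C)
    (hL : ∀ M > 0,
      Tendsto (fun n => μ {ω |
          -M ≤ sSup ((fun θ => L n ω θ - L n ω θstar) '' {θ | θ ∈ Θ ∧ ε ≤ ‖θ - θstar‖})})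
        atTop (nhds 0)) :
    ∀ M > 0,
      Tendsto (fun n => μ ({ω |
          -M ≤ sSup ((fun θ => (L n ω θ + a n ω θ - b θ) -
            (L n ω θstar + a n ω θstar - b θstar)) '' {θ | θ ∈ Θ ∧ ε ≤ ‖θ - θstar‖})} ∩ B)
          / μ B) atTop (nhds 0) := by
  intro M hM
  obtain ⟨C, hC⟩ := hb
  have hC0 : 0 ≤ C := by have := hC θstar hθstar; linarith
  set S : Set (EuclideanSpace ℝ (Fin p)) := {θ | θ ∈ Θ ∧ ε ≤ ‖θ - θstar‖} with hSdef
  by_cases hS : S.Nonempty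
  · set M' : ℝ := M + 1 + C with hM'def
    have hM' : 0 < M' := by simp only [hM'def]; linarith
    have key : ∀ n : ℕ, {ω | -M ≤ sSup ((fun θ => (L n ω θ + a n ω θ - b θ) -
            (L n ω θstar + a n ω θstar - b θstar)) '' S)} ∩ B
        ⊆ {ω | -M' ≤ sSup ((fun θ => L n ω θ - L n ω θstar) '' S)}
          ∪ ({ω | a n ω θstar ≤ -(1:ℝ)} ∩ B) := by
      intro n ω hω
      obtain ⟨hω1, hωB⟩ := hω
      simp only [Set.mem_setOf_eq] at hω1
      by_cases ha1 : a n ω θstar ≤ -(1:ℝ)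
      · exact Or.inr ⟨ha1, hωB⟩
      · push_neg at ha1
        left
        simp only [Set.mem_setOf_eq]
        by_cases hbdd : BddAbove ((fun θ => L n ω θ - L n ω θstar) '' S)
        · have hle : sSup ((fun θ => (L n ω θ + a n ω θ - b θ) -
              (L n ω θstar + a n ω θstar - b θstar)) '' S)
              ≤ sSup ((fun θ => L n ω θ - L n ω θstar) '' S) + (-(a n ω θstar) + C) := by
            apply csSup_le (hS.image _)
            rintro x ⟨θ, hθ, rfl⟩
            have h1 : a n ω θ ≤ 0 := ha_nonpos n ω θ
            have h2 : b θstar - b θ ≤ C := hC θ hθ.1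
            have h3 : L n ω θ - L n ω θstar
                ≤ sSup ((fun θ => L n ω θ - L n ω θstar) '' S) :=
              le_csSup hbdd ⟨θ, hθ, rfl⟩
            dsimp only
            linarith
          simp only [hM'def]
          linarith
        · rw [Real.sSup_of_not_bddAbove hbdd]
          linarith
    have hBne : μ B ≠ 0 := hBpos.ne'
    have hBtop : μ B ≠ ⊤ := measure_ne_top μ B
    have h1 : Tendsto (fun n => μ {ω | -M' ≤ sSup ((fun θ => L n ω θ - L n ω θstar) '' S)}
        / μ B) atTop (nhds 0) := by
      simp only [div_eq_mul_inv]
      have := ENNReal.Tendsto.mul_const (hL M' hM')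
        (Or.inr (ENNReal.inv_ne_top.mpr hBne))
      simpa using this
    have h2 := ha_star 1 one_pos
    have hsum : Tendsto (fun n =>
        μ {ω | -M' ≤ sSup ((fun θ => L n ω θ - L n ω θstar) '' S)} / μ B
        + μ ({ω | a n ω θstar ≤ -(1:ℝ)} ∩ B) / μ B) atTop (nhds 0) := by
      have := h1.add h2
      simpa using this
    apply tendsto_of_tendsto_of_tendsto_of_le_of_le tendsto_const_nhds hsum
      (fun n => zero_le)
    intro n
    calc μ ({ω | -M ≤ sSup ((fun θ => (L n ω θ + a n ω θ - b θ) -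
            (L n ω θstar + a n ω θstar - b θstar)) '' S)} ∩ B) / μ B
        ≤ (μ {ω | -M' ≤ sSup ((fun θ => L n ω θ - L n ω θstar) '' S)}
            + μ ({ω | a n ω θstar ≤ -(1:ℝ)} ∩ B)) / μ B := by
          apply ENNReal.div_le_div_right
          exact le_trans (measure_mono (key n)) (measure_union_le _ _)
      _ = _ := ENNReal.add_div
  · exfalso
    have hSe : S = ∅ := Set.not_nonempty_iff_eq_empty.mp hS
    have heq : ∀ n : ℕ, {ω | -M ≤ sSup ((fun θ => L n ω θ - L n ω θstar) '' S)}
        = Set.univ := by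
      intro n
      ext ω
      simp [hSe, Real.sSup_empty, hM.le]
    have h := hL M hM
    simp only [heq, measure_univ] at h
    exact zero_ne_one (tendsto_nhds_unique h tendsto_const_nhds)
end

section
/- Let X ⊂ ℝ^d be a bounded set and x₀ ∈ ℝ^d. For τ > 0 define f_τ : ℝ^d → ℝ by f_τ(x) = (Σ_{j=1}^d x_j²)·exp(−τ‖x − x₀‖²). Then there exists τ > 0 such that for all x ∈ X, the Hessian matrix ∇²f_τ(x) satisfies vᵀ(∇²f_τ(x))v ≥ ‖v‖² for all v ∈ ℝ^d; that is, the smallest eigenvalue of ∇²f_τ(x) is at least 1 on X. -/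
set_option maxHeartbeats 1000000

open Finset

open scoped RealInnerProductSpace

/-- On a bounded set `X`, the function `f_τ(x) = (Σ_j x_j²) exp(-τ‖x-x₀‖²)` has, for some
`τ > 0`, a Hessian which is uniformly positive definite on `X`: `vᵀ ∇²f_τ(x) v ≥ ‖v‖²`
for all `v`, i.e. the smallest eigenvalue of the Hessian is at least `1` on `X`. -/
theorem exists_mean_function_convex (d : ℕ) (X : Set (EuclideanSpace ℝ (Fin d)))
    (hX : Bornology.IsBounded X) (x₀ : EuclideanSpace ℝ (Fin d)) :
    ∃ τ > (0 : ℝ), ∀ x ∈ X, ∀ v : EuclideanSpace ℝ (Fin d),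
      ‖v‖ ^ 2 ≤ fderiv ℝ
        (fun y : EuclideanSpace ℝ (Fin d) =>
          fderiv ℝ
            (fun z : EuclideanSpace ℝ (Fin d) =>
              (∑ j : Fin d, z j ^ 2) * Real.exp (-τ * ‖z - x₀‖ ^ 2)) y v)
        x v := by
  obtain ⟨R, hR0, hRX⟩ := hX.subset_closedBall_lt 0 0
  have hx0 : (0:ℝ) ≤ ‖x₀‖ := norm_nonneg _
  set B : ℝ := (R + ‖x₀‖)^2 with hB
  set C : ℝ := 8*R*(R+‖x₀‖) + 2*R^2 with hC
  have hBC : (0:ℝ) < B + C + 1 := by positivity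
  refine ⟨1/(4*(B+C+1)), by positivity, ?_⟩
  set τ : ℝ := 1/(4*(B+C+1)) with hτdef
  have hτpos : 0 < τ := by positivity
  have hτB : τ * B ≤ 1/4 := by
    rw [hτdef, div_mul_eq_mul_div, one_mul, div_le_div_iff₀ (by positivity) (by norm_num)]
    nlinarith [sq_nonneg (R + ‖x₀‖)]
  have hτC : τ * C ≤ 1/4 := by
    rw [hτdef, div_mul_eq_mul_div, one_mul, div_le_div_iff₀ (by positivity) (by norm_num)]
    nlinarith [sq_nonneg (R + ‖x₀‖)]
  intro x hx v
  have hxR : ‖x‖ ≤ R := by simpa using hRX hx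
  have hxx0 : ‖x - x₀‖ ≤ R + ‖x₀‖ := (norm_sub_le _ _).trans (by linarith)
  have hsum : ∀ z : EuclideanSpace ℝ (Fin d), (∑ j, z j ^ 2) = ‖z‖^2 := by
    intro z
    rw [EuclideanSpace.norm_eq, Real.sq_sqrt (by positivity)]
    simp [Real.norm_eq_abs, sq_abs]
  have hfun : (fun z : EuclideanSpace ℝ (Fin d) =>
      (∑ j : Fin d, z j ^ 2) * Real.exp (-τ * ‖z - x₀‖ ^ 2))
      = (fun z => ‖z‖^2 * Real.exp (-τ * ‖z - x₀‖ ^ 2)) := by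
    funext z; rw [hsum]
  rw [hfun]
  -- first derivative formula
  have key : (fun y : EuclideanSpace ℝ (Fin d) =>
      fderiv ℝ (fun z => ‖z‖^2 * Real.exp (-τ * ‖z - x₀‖ ^ 2)) y v)
      = fun y => Real.exp (-τ*‖y-x₀‖^2) * (2*⟪y,v⟫ - 2*τ*‖y‖^2*⟪y-x₀,v⟫) := by
    funext y
    have h1 : HasFDerivAt (fun z : EuclideanSpace ℝ (Fin d) => ‖z - x₀‖^2)
        (2 • ((innerSL ℝ (y - x₀)).comp (ContinuousLinearMap.id ℝ _))) y :=
      ((hasFDerivAt_id y).sub_const x₀).norm_sq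
    have h2 := (h1.const_mul (-τ)).exp
    have h3 := (hasStrictFDerivAt_norm_sq y).hasFDerivAt
    have h4 : HasFDerivAt (fun z : EuclideanSpace ℝ (Fin d) =>
        ‖z‖^2 * Real.exp (-τ * ‖z - x₀‖ ^ 2)) _ y := h3.mul h2
    rw [h4.fderiv]
    simp only [ContinuousLinearMap.add_apply, ContinuousLinearMap.sub_apply,
      ContinuousLinearMap.smul_apply, ContinuousLinearMap.coe_comp', Function.comp_apply,
      ContinuousLinearMap.id_apply, ContinuousLinearMap.prod_apply, ContinuousLinearMap.zero_apply,
      fderivInnerCLM_apply, innerSL_apply_apply, smul_eq_mul, nsmul_eq_mul, inner_zero_right,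
      add_zero, id_eq, Nat.cast_ofNat, real_inner_self_eq_norm_sq]
    ring
  rw [key]
  -- second derivative
  have h1 : HasFDerivAt (fun z : EuclideanSpace ℝ (Fin d) => ‖z - x₀‖^2)
      (2 • ((innerSL ℝ (x - x₀)).comp (ContinuousLinearMap.id ℝ _))) x :=
    ((hasFDerivAt_id x).sub_const x₀).norm_sq
  have hE : HasFDerivAt (fun z : EuclideanSpace ℝ (Fin d) => Real.exp (-τ*‖z-x₀‖^2)) _ x :=
    (h1.const_mul (-τ)).exp
  have hI1 : HasFDerivAt (fun y : EuclideanSpace ℝ (Fin d) => ⟪y, v⟫) _ x :=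
    (hasFDerivAt_id x).inner ℝ (hasFDerivAt_const v x)
  have hI2 : HasFDerivAt (fun y : EuclideanSpace ℝ (Fin d) => ⟪y - x₀, v⟫) _ x :=
    ((hasFDerivAt_id x).sub_const x₀).inner ℝ (hasFDerivAt_const v x)
  have hG := (hasStrictFDerivAt_norm_sq x).hasFDerivAt
  have hS : HasFDerivAt (fun y : EuclideanSpace ℝ (Fin d) =>
      2*⟪y,v⟫ - 2*τ*‖y‖^2*⟪y-x₀,v⟫) _ x :=
    (hI1.const_mul 2).sub ((hG.const_mul (2*τ)).mul hI2)
  have hφ : HasFDerivAt (fun y : EuclideanSpace ℝ (Fin d) =>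
      Real.exp (-τ*‖y-x₀‖^2) * (2*⟪y,v⟫ - 2*τ*‖y‖^2*⟪y-x₀,v⟫)) _ x := hE.mul hS
  have hval : fderiv ℝ (fun y : EuclideanSpace ℝ (Fin d) =>
        Real.exp (-τ*‖y-x₀‖^2) * (2*⟪y,v⟫ - 2*τ*‖y‖^2*⟪y-x₀,v⟫)) x v
      = Real.exp (-τ*‖x-x₀‖^2) *
        (2*‖v‖^2 - 8*τ*⟪x,v⟫*⟪x-x₀,v⟫ + 4*τ^2*‖x‖^2*⟪x-x₀,v⟫^2 - 2*τ*‖x‖^2*‖v‖^2) := by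
    rw [hφ.fderiv]
    simp only [ContinuousLinearMap.add_apply, ContinuousLinearMap.sub_apply,
      ContinuousLinearMap.smul_apply, ContinuousLinearMap.coe_comp', Function.comp_apply,
      ContinuousLinearMap.id_apply, ContinuousLinearMap.prod_apply, ContinuousLinearMap.zero_apply,
      fderivInnerCLM_apply, innerSL_apply_apply, smul_eq_mul, nsmul_eq_mul, inner_zero_right,
      add_zero, id_eq, Nat.cast_ofNat, real_inner_self_eq_norm_sq]
    ring
  rw [hval]
  -- final inequality
  set e := Real.exp (-τ*‖x-x₀‖^2) with he
  set p := ⟪x,v⟫ with hp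
  set r := ⟪x-x₀,v⟫ with hr
  have hep : (3:ℝ)/4 ≤ e := by
    have := Real.add_one_le_exp (-τ*‖x-x₀‖^2)
    have hb : τ * ‖x-x₀‖^2 ≤ 1/4 := by
      have : ‖x-x₀‖^2 ≤ B := by
        rw [hB]; exact pow_le_pow_left₀ (norm_nonneg _) hxx0 2
      nlinarith
    linarith
  have hpr : p * r ≤ R*(R+‖x₀‖)*‖v‖^2 := by
    have h1 : |p| ≤ ‖x‖*‖v‖ := abs_real_inner_le_norm x v
    have h2 : |r| ≤ ‖x-x₀‖*‖v‖ := abs_real_inner_le_norm _ v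
    have h3 : p * r ≤ |p| * |r| := le_trans (le_abs_self _) (by rw [abs_mul])
    have h4 : |p| * |r| ≤ (R*‖v‖) * ((R+‖x₀‖)*‖v‖) :=
      mul_le_mul (h1.trans (mul_le_mul_of_nonneg_right hxR (norm_nonneg v)))
        (h2.trans (mul_le_mul_of_nonneg_right hxx0 (norm_nonneg v))) (abs_nonneg _)
        (mul_nonneg hR0.le (norm_nonneg v))
    nlinarith
  have hgx : ‖x‖^2 ≤ R^2 := by nlinarith [norm_nonneg x]
  have hgxv : ‖x‖^2*‖v‖^2 ≤ R^2*‖v‖^2 := mul_le_mul_of_nonneg_right hgx (sq_nonneg _)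
  have h5a : 8*τ*(p*r) ≤ 8*τ*(R*(R+‖x₀‖)*‖v‖^2) :=
    mul_le_mul_of_nonneg_left hpr (by linarith)
  have h5b : 2*τ*(‖x‖^2*‖v‖^2) ≤ 2*τ*(R^2*‖v‖^2) :=
    mul_le_mul_of_nonneg_left hgxv (by linarith)
  have h6 : τ*C*‖v‖^2 ≤ 1/4*‖v‖^2 := mul_le_mul_of_nonneg_right hτC (sq_nonneg _)
  have h6' : 8*τ*(R*(R+‖x₀‖)*‖v‖^2) + 2*τ*(R^2*‖v‖^2) = τ*C*‖v‖^2 := by rw [hC]; ring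
  have h7 : (0:ℝ) ≤ 4*τ^2*‖x‖^2*r^2 := by positivity
  have hbracket : (7:ℝ)/4 * ‖v‖^2 ≤
      2*‖v‖^2 - 8*τ*p*r + 4*τ^2*‖x‖^2*r^2 - 2*τ*‖x‖^2*‖v‖^2 := by
    nlinarith [h5a, h5b, h6, h6', h7]
  have hfin := mul_le_mul hep hbracket (by positivity) (Real.exp_pos _).le
  nlinarith [hfin, sq_nonneg ‖v‖]
end
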